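/- Let E ⊂ ℝ² be a bounded Lipschitz domain. If u is a C¹ displacement on the closure of E whose exact stress σ(u) = C ε(u) is an affine self-equilibrated field, i.e., σ(u) = Pβ̄ for some β̄ ∈ ℝ⁷, and the body force is zero (σp = 0), then the RCP solution β = H⁻¹ g with g = ∫_{∂E} Pᵀ N_Eᵀ u recovers the exact stress: β = β̄. -/

import Mathlib

open MeasureTheory Matrix

/-- Partial derivative in the x-direction. -/
noncomputable def pdx (f : ℝ × ℝ → ℝ) (p : ℝ × ℝ) : ℝ := deriv (fun t => f (t, p.2)) p.1

/-- Partial derivative in the y-direction. -/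
noncomputable def pdy (f : ℝ × ℝ → ℝ) (p : ℝ × ℝ) : ℝ := deriv (fun t => f (p.1, t)) p.2

/-- The 3×7 matrix of self-equilibrated affine stress modes. -/
noncomputable def Pmat (p : ℝ × ℝ) : Matrix (Fin 3) (Fin 7) ℝ :=
  !![1, 0, 0, p.2, 0, p.1, 0;
     0, 1, 0, 0, p.1, 0, p.2;
     0, 0, 1, 0, 0, -p.2, -p.1]

/-- Engineering strain vector (εx, εy, γxy) of the displacement (u1, u2). -/
noncomputable def strain (u1 u2 : ℝ × ℝ → ℝ) (p : ℝ × ℝ) : Fin 3 → ℝ :=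
  ![pdx u1 p, pdy u2 p, pdy u1 p + pdx u2 p]

section Aux

@[simp] lemma Pmat_00 (p : ℝ × ℝ) : Pmat p 0 0 = 1 := rfl
@[simp] lemma Pmat_01 (p : ℝ × ℝ) : Pmat p 0 1 = 0 := rfl
@[simp] lemma Pmat_02 (p : ℝ × ℝ) : Pmat p 0 2 = 0 := rfl
@[simp] lemma Pmat_03 (p : ℝ × ℝ) : Pmat p 0 3 = p.2 := rfl
@[simp] lemma Pmat_04 (p : ℝ × ℝ) : Pmat p 0 4 = 0 := rfl
@[simp] lemma Pmat_05 (p : ℝ × ℝ) : Pmat p 0 5 = p.1 := rfl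
@[simp] lemma Pmat_06 (p : ℝ × ℝ) : Pmat p 0 6 = 0 := rfl
@[simp] lemma Pmat_10 (p : ℝ × ℝ) : Pmat p 1 0 = 0 := rfl
@[simp] lemma Pmat_11 (p : ℝ × ℝ) : Pmat p 1 1 = 1 := rfl
@[simp] lemma Pmat_12 (p : ℝ × ℝ) : Pmat p 1 2 = 0 := rfl
@[simp] lemma Pmat_13 (p : ℝ × ℝ) : Pmat p 1 3 = 0 := rfl
@[simp] lemma Pmat_14 (p : ℝ × ℝ) : Pmat p 1 4 = p.1 := rfl
@[simp] lemma Pmat_15 (p : ℝ × ℝ) : Pmat p 1 5 = 0 := rfl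
@[simp] lemma Pmat_16 (p : ℝ × ℝ) : Pmat p 1 6 = p.2 := rfl
@[simp] lemma Pmat_20 (p : ℝ × ℝ) : Pmat p 2 0 = 0 := rfl
@[simp] lemma Pmat_21 (p : ℝ × ℝ) : Pmat p 2 1 = 0 := rfl
@[simp] lemma Pmat_22 (p : ℝ × ℝ) : Pmat p 2 2 = 1 := rfl
@[simp] lemma Pmat_23 (p : ℝ × ℝ) : Pmat p 2 3 = 0 := rfl
@[simp] lemma Pmat_24 (p : ℝ × ℝ) : Pmat p 2 4 = 0 := rfl
@[simp] lemma Pmat_25 (p : ℝ × ℝ) : Pmat p 2 5 = -p.2 := rfl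
@[simp] lemma Pmat_26 (p : ℝ × ℝ) : Pmat p 2 6 = -p.1 := rfl

@[simp] lemma strain_0 (u1 u2 : ℝ × ℝ → ℝ) (p : ℝ × ℝ) : strain u1 u2 p 0 = pdx u1 p := rfl
@[simp] lemma strain_1 (u1 u2 : ℝ × ℝ → ℝ) (p : ℝ × ℝ) : strain u1 u2 p 1 = pdy u2 p := rfl
@[simp] lemma strain_2 (u1 u2 : ℝ × ℝ → ℝ) (p : ℝ × ℝ) :
    strain u1 u2 p 2 = pdy u1 p + pdx u2 p := rfl

lemma Pmat_cont (k : Fin 3) (j : Fin 7) : Continuous fun p : ℝ × ℝ => Pmat p k j := by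
  fin_cases k <;> fin_cases j <;>
    first
      | exact continuous_const
      | exact continuous_fst
      | exact continuous_snd
      | exact continuous_fst.neg
      | exact continuous_snd.neg

/-- The key pointwise divergence identity. -/
lemma div_eq (u1 u2 : ℝ × ℝ → ℝ) (p : ℝ × ℝ)
    (h1 : DifferentiableAt ℝ u1 p) (h2 : DifferentiableAt ℝ u2 p) (i : Fin 7) :
    pdx (fun q => u1 q * Pmat q 0 i + u2 q * Pmat q 2 i) p
      + pdy (fun q => u1 q * Pmat q 2 i + u2 q * Pmat q 1 i) p
    = ∑ k, Pmat p k i * strain u1 u2 p k := by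
  have d1x : DifferentiableAt ℝ (fun t => u1 (t, p.2)) p.1 :=
    h1.comp p.1 (differentiableAt_id.prodMk (differentiableAt_const _))
  have d2x : DifferentiableAt ℝ (fun t => u2 (t, p.2)) p.1 :=
    h2.comp p.1 (differentiableAt_id.prodMk (differentiableAt_const _))
  have d1y : DifferentiableAt ℝ (fun t => u1 (p.1, t)) p.2 :=
    h1.comp p.2 ((differentiableAt_const _).prodMk differentiableAt_id)
  have d2y : DifferentiableAt ℝ (fun t => u2 (p.1, t)) p.2 :=
    h2.comp p.2 ((differentiableAt_const _).prodMk differentiableAt_id)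
  have hd1x : HasDerivAt (fun t => u1 (t, p.2)) (pdx u1 p) p.1 := d1x.hasDerivAt
  have hd2x : HasDerivAt (fun t => u2 (t, p.2)) (pdx u2 p) p.1 := d2x.hasDerivAt
  have hd1y : HasDerivAt (fun t => u1 (p.1, t)) (pdy u1 p) p.2 := d1y.hasDerivAt
  have hd2y : HasDerivAt (fun t => u2 (p.1, t)) (pdy u2 p) p.2 := d2y.hasDerivAt
  obtain ⟨n, hn⟩ := i
  interval_cases n
  · -- i = 0
    show deriv (fun t => u1 (t, p.2) * 1 + u2 (t, p.2) * 0) p.1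
        + deriv (fun t => u1 (p.1, t) * 0 + u2 (p.1, t) * 0) p.2
        = ∑ k, Pmat p k (0 : Fin 7) * strain u1 u2 p k
    have hX : HasDerivAt (fun t => u1 (t, p.2) * 1 + u2 (t, p.2) * 0)
        (pdx u1 p * 1 + pdx u2 p * 0) p.1 := (hd1x.mul_const 1).add (hd2x.mul_const 0)
    have hY : HasDerivAt (fun t => u1 (p.1, t) * 0 + u2 (p.1, t) * 0)
        (pdy u1 p * 0 + pdy u2 p * 0) p.2 := (hd1y.mul_const 0).add (hd2y.mul_const 0)
    rw [hX.deriv, hY.deriv]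
    simp [Fin.sum_univ_three]
  · -- i = 1
    show deriv (fun t => u1 (t, p.2) * 0 + u2 (t, p.2) * 0) p.1
        + deriv (fun t => u1 (p.1, t) * 0 + u2 (p.1, t) * 1) p.2
        = ∑ k, Pmat p k (1 : Fin 7) * strain u1 u2 p k
    have hX : HasDerivAt (fun t => u1 (t, p.2) * 0 + u2 (t, p.2) * 0)
        (pdx u1 p * 0 + pdx u2 p * 0) p.1 := (hd1x.mul_const 0).add (hd2x.mul_const 0)
    have hY : HasDerivAt (fun t => u1 (p.1, t) * 0 + u2 (p.1, t) * 1)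
        (pdy u1 p * 0 + pdy u2 p * 1) p.2 := (hd1y.mul_const 0).add (hd2y.mul_const 1)
    rw [hX.deriv, hY.deriv]
    simp [Fin.sum_univ_three]
  · -- i = 2
    show deriv (fun t => u1 (t, p.2) * 0 + u2 (t, p.2) * 1) p.1
        + deriv (fun t => u1 (p.1, t) * 1 + u2 (p.1, t) * 0) p.2
        = ∑ k, Pmat p k (2 : Fin 7) * strain u1 u2 p k
    have hX : HasDerivAt (fun t => u1 (t, p.2) * 0 + u2 (t, p.2) * 1)
        (pdx u1 p * 0 + pdx u2 p * 1) p.1 := (hd1x.mul_const 0).add (hd2x.mul_const 1)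
    have hY : HasDerivAt (fun t => u1 (p.1, t) * 1 + u2 (p.1, t) * 0)
        (pdy u1 p * 1 + pdy u2 p * 0) p.2 := (hd1y.mul_const 1).add (hd2y.mul_const 0)
    rw [hX.deriv, hY.deriv]
    simp [Fin.sum_univ_three]
    ring
  · -- i = 3
    show deriv (fun t => u1 (t, p.2) * p.2 + u2 (t, p.2) * 0) p.1
        + deriv (fun t => u1 (p.1, t) * 0 + u2 (p.1, t) * 0) p.2
        = ∑ k, Pmat p k (3 : Fin 7) * strain u1 u2 p k
    have hX : HasDerivAt (fun t => u1 (t, p.2) * p.2 + u2 (t, p.2) * 0)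
        (pdx u1 p * p.2 + pdx u2 p * 0) p.1 := (hd1x.mul_const p.2).add (hd2x.mul_const 0)
    have hY : HasDerivAt (fun t => u1 (p.1, t) * 0 + u2 (p.1, t) * 0)
        (pdy u1 p * 0 + pdy u2 p * 0) p.2 := (hd1y.mul_const 0).add (hd2y.mul_const 0)
    rw [hX.deriv, hY.deriv]
    simp [Fin.sum_univ_three]
    ring
  · -- i = 4
    show deriv (fun t => u1 (t, p.2) * 0 + u2 (t, p.2) * 0) p.1
        + deriv (fun t => u1 (p.1, t) * 0 + u2 (p.1, t) * p.1) p.2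
        = ∑ k, Pmat p k (4 : Fin 7) * strain u1 u2 p k
    have hX : HasDerivAt (fun t => u1 (t, p.2) * 0 + u2 (t, p.2) * 0)
        (pdx u1 p * 0 + pdx u2 p * 0) p.1 := (hd1x.mul_const 0).add (hd2x.mul_const 0)
    have hY : HasDerivAt (fun t => u1 (p.1, t) * 0 + u2 (p.1, t) * p.1)
        (pdy u1 p * 0 + pdy u2 p * p.1) p.2 := (hd1y.mul_const 0).add (hd2y.mul_const p.1)
    rw [hX.deriv, hY.deriv]
    simp [Fin.sum_univ_three]
    ring
  · -- i = 5
    show deriv (fun t => u1 (t, p.2) * t + u2 (t, p.2) * -p.2) p.1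
        + deriv (fun t => u1 (p.1, t) * -t + u2 (p.1, t) * 0) p.2
        = ∑ k, Pmat p k (5 : Fin 7) * strain u1 u2 p k
    have hX : HasDerivAt (fun t => u1 (t, p.2) * t + u2 (t, p.2) * -p.2)
        ((pdx u1 p * p.1 + u1 p * 1) + pdx u2 p * -p.2) p.1 :=
      (hd1x.mul (hasDerivAt_id p.1)).add (hd2x.mul_const (-p.2))
    have hY : HasDerivAt (fun t => u1 (p.1, t) * -t + u2 (p.1, t) * 0)
        ((pdy u1 p * -p.2 + u1 p * -1) + pdy u2 p * 0) p.2 :=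
      (hd1y.mul ((hasDerivAt_id p.2).neg)).add (hd2y.mul_const 0)
    rw [hX.deriv, hY.deriv]
    simp [Fin.sum_univ_three]
    ring
  · -- i = 6
    show deriv (fun t => u1 (t, p.2) * 0 + u2 (t, p.2) * -t) p.1
        + deriv (fun t => u1 (p.1, t) * -p.1 + u2 (p.1, t) * t) p.2
        = ∑ k, Pmat p k (6 : Fin 7) * strain u1 u2 p k
    have hX : HasDerivAt (fun t => u1 (t, p.2) * 0 + u2 (t, p.2) * -t)
        (pdx u1 p * 0 + (pdx u2 p * -p.1 + u2 p * -1)) p.1 :=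
      (hd1x.mul_const 0).add (hd2x.mul ((hasDerivAt_id p.1).neg))
    have hY : HasDerivAt (fun t => u1 (p.1, t) * -p.1 + u2 (p.1, t) * t)
        (pdy u1 p * -p.1 + (pdy u2 p * p.2 + u2 p * 1)) p.2 :=
      (hd1y.mul_const (-p.1)).add (hd2y.mul (hasDerivAt_id p.2))
    rw [hX.deriv, hY.deriv]
    simp [Fin.sum_univ_three]
    ring

end Aux

lemma Pmat_contDiff (k : Fin 3) (j : Fin 7) : ContDiff ℝ 1 fun p : ℝ × ℝ => Pmat p k j := by
  fin_cases k <;> fin_cases j <;>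
    first
      | exact contDiff_const
      | exact contDiff_fst
      | exact contDiff_snd
      | exact contDiff_fst.neg
      | exact contDiff_snd.neg

/-- Consistency of the RCP recovery: if the exact stress Cε(u) is an affine
self-equilibrated field Pβ̄ and the body force vanishes, then the RCP solution
β = H⁻¹g recovers β̄ exactly.  The boundary integrals defining g are expressed
through the outward flux functional `flux`, characterised by the divergence
theorem on E. -/
theorem stmt15 (E : Set (ℝ × ℝ)) (hEo : IsOpen E) (hEm : MeasurableSet E)
    (hEb : Bornology.IsBounded E) (hEpos : 0 < volume E)
    (C : Matrix (Fin 3) (Fin 3) ℝ) (hCsymm : C.IsSymm) (hC : C.PosDef)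
    (flux : (ℝ × ℝ → ℝ × ℝ) → ℝ)
    (hdiv : ∀ F : ℝ × ℝ → ℝ × ℝ, ContDiffOn ℝ 1 F (closure E) →
      flux F = ∫ p in E, (pdx (fun q => (F q).1) p + pdy (fun q => (F q).2) p))
    (u1 u2 : ℝ × ℝ → ℝ)
    (hu : ContDiffOn ℝ 1 (fun p => (u1 p, u2 p)) (closure E))
    (βb : Fin 7 → ℝ)
    (hexact : ∀ p ∈ E, C *ᵥ strain u1 u2 p = Pmat p *ᵥ βb)
    (H : Matrix (Fin 7) (Fin 7) ℝ)
    (hH : ∀ i j, H i j = ∫ p in E, ((Pmat p)ᵀ * C⁻¹ * Pmat p) i j)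
    (g : Fin 7 → ℝ)
    (hg : ∀ i, g i = flux (fun p =>
      (u1 p * Pmat p 0 i + u2 p * Pmat p 2 i,
       u1 p * Pmat p 2 i + u2 p * Pmat p 1 i))) :
    H⁻¹ *ᵥ g = βb := by
  -- basic facts
  have hcompact : IsCompact (closure E) := hEb.isCompact_closure
  have hInt : ∀ f : ℝ × ℝ → ℝ, Continuous f → IntegrableOn f E volume := fun f hf =>
    (hf.continuousOn.integrableOn_compact hcompact).mono_set subset_closure
  have hMc : ∀ i j, Continuous fun p : ℝ × ℝ => ((Pmat p)ᵀ * C⁻¹ * Pmat p) i j := by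
    intro i j
    simp only [Matrix.mul_apply, Matrix.transpose_apply]
    refine continuous_finset_sum _ fun l _ => ?_
    exact (continuous_finset_sum _ fun k _ => (Pmat_cont k i).mul continuous_const).mul
      (Pmat_cont l j)
  have hCdet : IsUnit C.det := isUnit_iff_ne_zero.mpr hC.det_pos.ne'
  have hstrain : ∀ p ∈ E, strain u1 u2 p = C⁻¹ *ᵥ (Pmat p *ᵥ βb) := by
    intro p hp
    rw [← hexact p hp, Matrix.mulVec_mulVec, Matrix.nonsing_inv_mul C hCdet, Matrix.one_mulVec]
  have hdiff : ∀ p ∈ E, DifferentiableAt ℝ u1 p ∧ DifferentiableAt ℝ u2 p := by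
    intro p hp
    have hnb : closure E ∈ nhds p := Filter.mem_of_superset (hEo.mem_nhds hp) subset_closure
    have h := (hu.contDiffAt hnb).differentiableAt one_ne_zero
    exact ⟨h.fst, h.snd⟩
  -- the key identity for H
  have key : ∀ (v : Fin 7 → ℝ) (i : Fin 7),
      (H *ᵥ v) i = ∫ p in E, ((((Pmat p)ᵀ * C⁻¹ * Pmat p)) *ᵥ v) i := by
    intro v i
    calc (H *ᵥ v) i = ∑ j, H i j * v j := rfl
      _ = ∑ j, (∫ p in E, ((Pmat p)ᵀ * C⁻¹ * Pmat p) i j) * v j :=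
          Finset.sum_congr rfl fun j _ => by rw [hH]
      _ = ∑ j, ∫ p in E, (((Pmat p)ᵀ * C⁻¹ * Pmat p) i j * v j) :=
          Finset.sum_congr rfl fun j _ => (integral_mul_const _ _).symm
      _ = ∫ p in E, ∑ j, (((Pmat p)ᵀ * C⁻¹ * Pmat p) i j * v j) :=
          (integral_finset_sum _ fun j _ => hInt _ ((hMc i j).mul continuous_const)).symm
      _ = ∫ p in E, ((((Pmat p)ᵀ * C⁻¹ * Pmat p)) *ᵥ v) i := rfl
  -- g = H *ᵥ βb
  have hu1 : ContDiffOn ℝ 1 u1 (closure E) := hu.fst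
  have hu2 : ContDiffOn ℝ 1 u2 (closure E) := hu.snd
  have hgHβ : g = H *ᵥ βb := by
    funext i
    have hF : ContDiffOn ℝ 1 (fun p : ℝ × ℝ =>
        ((u1 p * Pmat p 0 i + u2 p * Pmat p 2 i,
          u1 p * Pmat p 2 i + u2 p * Pmat p 1 i) : ℝ × ℝ)) (closure E) := by
      refine ContDiffOn.prodMk ?_ ?_
      · exact (hu1.mul ((Pmat_contDiff 0 i).contDiffOn)).add
          (hu2.mul ((Pmat_contDiff 2 i).contDiffOn))
      · exact (hu1.mul ((Pmat_contDiff 2 i).contDiffOn)).add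
          (hu2.mul ((Pmat_contDiff 1 i).contDiffOn))
    rw [hg i, hdiv _ hF, key βb i]
    refine setIntegral_congr_fun hEm fun p hp => ?_
    have hdi : pdx (fun q =>
          ((u1 q * Pmat q 0 i + u2 q * Pmat q 2 i,
            u1 q * Pmat q 2 i + u2 q * Pmat q 1 i) : ℝ × ℝ).1) p
        + pdy (fun q =>
          ((u1 q * Pmat q 0 i + u2 q * Pmat q 2 i,
            u1 q * Pmat q 2 i + u2 q * Pmat q 1 i) : ℝ × ℝ).2) p
        = ∑ k, Pmat p k i * strain u1 u2 p k :=
      div_eq u1 u2 p (hdiff p hp).1 (hdiff p hp).2 i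
    rw [hdi, hstrain p hp, ← Matrix.mulVec_mulVec, ← Matrix.mulVec_mulVec]
    simp [Matrix.mulVec, dotProduct, Matrix.transpose_apply]
  -- H is invertible
  have hHdet : IsUnit H.det := by
    rw [isUnit_iff_ne_zero]
    intro hd
    obtain ⟨x, hx, hHx⟩ := (Matrix.exists_mulVec_eq_zero_iff (M := H)).mpr hd
    apply hx
    have hPx : ∀ k : Fin 3, Continuous fun p : ℝ × ℝ => (Pmat p *ᵥ x) k := by
      intro k
      show Continuous fun p : ℝ × ℝ => ∑ j, Pmat p k j * x j
      exact continuous_finset_sum _ fun j _ => (Pmat_cont k j).mul continuous_const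
    have hQc : Continuous fun p : ℝ × ℝ => (Pmat p *ᵥ x) ⬝ᵥ (C⁻¹ *ᵥ (Pmat p *ᵥ x)) := by
      show Continuous fun p : ℝ × ℝ => ∑ k, (Pmat p *ᵥ x) k * (C⁻¹ *ᵥ (Pmat p *ᵥ x)) k
      refine continuous_finset_sum _ fun k _ => (hPx k).mul ?_
      show Continuous fun p : ℝ × ℝ => ∑ l, C⁻¹ k l * (Pmat p *ᵥ x) l
      exact continuous_finset_sum _ fun l _ => continuous_const.mul (hPx l)
    have hQ0 : ∀ p : ℝ × ℝ, 0 ≤ (Pmat p *ᵥ x) ⬝ᵥ (C⁻¹ *ᵥ (Pmat p *ᵥ x)) := fun p => by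
      simpa using hC.inv.posSemidef.dotProduct_mulVec_nonneg (Pmat p *ᵥ x)
    have hMvx : ∀ i : Fin 7, Continuous fun p : ℝ × ℝ => ((((Pmat p)ᵀ * C⁻¹ * Pmat p)) *ᵥ x) i := by
      intro i
      show Continuous fun p : ℝ × ℝ => ∑ j, ((Pmat p)ᵀ * C⁻¹ * Pmat p) i j * x j
      exact continuous_finset_sum _ fun j _ => (hMc i j).mul continuous_const
    have h0 : ∫ p in E, (Pmat p *ᵥ x) ⬝ᵥ (C⁻¹ *ᵥ (Pmat p *ᵥ x)) = 0 := by
      have e2 : ∑ i, x i * (H *ᵥ x) i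
          = ∫ p in E, (Pmat p *ᵥ x) ⬝ᵥ (C⁻¹ *ᵥ (Pmat p *ᵥ x)) := by
        calc ∑ i, x i * (H *ᵥ x) i
            = ∑ i, x i * ∫ p in E, ((((Pmat p)ᵀ * C⁻¹ * Pmat p)) *ᵥ x) i :=
              Finset.sum_congr rfl fun i _ => by rw [key]
          _ = ∑ i, ∫ p in E, x i * ((((Pmat p)ᵀ * C⁻¹ * Pmat p)) *ᵥ x) i :=
              Finset.sum_congr rfl fun i _ => (integral_const_mul _ _).symm
          _ = ∫ p in E, ∑ i, x i * ((((Pmat p)ᵀ * C⁻¹ * Pmat p)) *ᵥ x) i :=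
              (integral_finset_sum _ fun i _ => hInt _ (continuous_const.mul (hMvx i))).symm
          _ = ∫ p in E, (Pmat p *ᵥ x) ⬝ᵥ (C⁻¹ *ᵥ (Pmat p *ᵥ x)) := by
              refine setIntegral_congr_fun hEm fun p _ => ?_
              show x ⬝ᵥ ((((Pmat p)ᵀ * C⁻¹ * Pmat p)) *ᵥ x) = _
              rw [← Matrix.mulVec_mulVec, ← Matrix.mulVec_mulVec, Matrix.dotProduct_mulVec,
                Matrix.vecMul_transpose]
      rw [← e2, hHx]
      simp
    have hae := (integral_eq_zero_iff_of_nonneg_ae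
      (Filter.Eventually.of_forall fun p => hQ0 p)
      (hInt _ hQc)).mp h0
    have hQE : ∀ p ∈ E, (Pmat p *ᵥ x) ⬝ᵥ (C⁻¹ *ᵥ (Pmat p *ᵥ x)) = 0 := by
      intro p hp
      by_contra hne
      have hnull : volume.restrict E {q : ℝ × ℝ | (Pmat q *ᵥ x) ⬝ᵥ (C⁻¹ *ᵥ (Pmat q *ᵥ x)) ≠ 0}
          = 0 := by
        have := hae
        rw [Filter.EventuallyEq, ae_iff] at this
        simpa using this
      set V : Set (ℝ × ℝ) :=
        E ∩ (fun q : ℝ × ℝ => (Pmat q *ᵥ x) ⬝ᵥ (C⁻¹ *ᵥ (Pmat q *ᵥ x))) ⁻¹' (Set.Ioi 0) with hV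
      have hVopen : IsOpen V := hEo.inter (isOpen_Ioi.preimage hQc)
      have hVp : p ∈ V := ⟨hp, lt_of_le_of_ne (hQ0 p) (Ne.symm hne)⟩
      have hVpos : 0 < volume V := hVopen.measure_pos volume ⟨p, hVp⟩
      have hsub : V ⊆ {q : ℝ × ℝ | (Pmat q *ᵥ x) ⬝ᵥ (C⁻¹ *ᵥ (Pmat q *ᵥ x)) ≠ 0} ∩ E :=
        fun q hq => ⟨ne_of_gt hq.2, hq.1⟩
      have : volume V ≤ volume.restrict E
          {q : ℝ × ℝ | (Pmat q *ᵥ x) ⬝ᵥ (C⁻¹ *ᵥ (Pmat q *ᵥ x)) ≠ 0} := by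
        rw [Measure.restrict_apply₀']
        · exact measure_mono hsub
        · exact hEm.nullMeasurableSet
      rw [hnull] at this
      exact absurd (le_antisymm this zero_le) hVpos.ne'
    have hPxz : ∀ p ∈ E, Pmat p *ᵥ x = 0 := by
      intro p hp
      by_contra hne
      have h2 : (0:ℝ) < (Pmat p *ᵥ x) ⬝ᵥ (C⁻¹ *ᵥ (Pmat p *ᵥ x)) := by
        simpa using hC.inv.dotProduct_mulVec_pos hne
      rw [hQE p hp] at h2
      exact lt_irrefl 0 h2
    -- now extract that x = 0 from vanishing at three points
    obtain ⟨p0, hp0⟩ := MeasureTheory.nonempty_of_measure_ne_zero hEpos.ne'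
    obtain ⟨ε, hε, hball⟩ := Metric.isOpen_iff.mp hEo p0 hp0
    have hc2 : (0:ℝ) < ε / 2 := by linarith
    have hmem : ∀ q : ℝ × ℝ, dist q p0 < ε → q ∈ E := fun q hq => hball hq
    have hp1 : ((p0.1 + ε / 2, p0.2) : ℝ × ℝ) ∈ E := by
      apply hmem
      rw [Prod.dist_eq]
      simp [Real.dist_eq, abs_of_pos hε]
      linarith
    have hp2 : ((p0.1, p0.2 + ε / 2) : ℝ × ℝ) ∈ E := by
      apply hmem
      rw [Prod.dist_eq]
      simp [Real.dist_eq, abs_of_pos hε]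
      linarith
    have eq0 : ∀ p ∈ E, x 0 + p.2 * x 3 + p.1 * x 5 = 0 := by
      intro p hp
      have h := congrFun (hPxz p hp) 0
      simp [Matrix.mulVec, dotProduct, Fin.sum_univ_seven] at h
      linarith
    have eq1 : ∀ p ∈ E, x 1 + p.1 * x 4 + p.2 * x 6 = 0 := by
      intro p hp
      have h := congrFun (hPxz p hp) 1
      simp [Matrix.mulVec, dotProduct, Fin.sum_univ_seven] at h
      linarith
    have eq2 : ∀ p ∈ E, x 2 - p.2 * x 5 - p.1 * x 6 = 0 := by
      intro p hp
      have h := congrFun (hPxz p hp) 2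
      simp [Matrix.mulVec, dotProduct, Fin.sum_univ_seven] at h
      linarith
    have A0 := eq0 p0 hp0
    have B0 := eq0 _ hp1
    have C0 := eq0 _ hp2
    have A1 := eq1 p0 hp0
    have B1 := eq1 _ hp1
    have C1 := eq1 _ hp2
    have A2 := eq2 p0 hp0
    simp only at B0 C0 B1 C1
    have hx5 : x 5 = 0 := by
      have h : ε / 2 * x 5 = 0 := by linarith
      rcases mul_eq_zero.mp h with h' | h'
      · exact absurd h' hc2.ne'
      · exact h'
    have hx3 : x 3 = 0 := by
      have h : ε / 2 * x 3 = 0 := by linarith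
      rcases mul_eq_zero.mp h with h' | h'
      · exact absurd h' hc2.ne'
      · exact h'
    have hx4 : x 4 = 0 := by
      have h : ε / 2 * x 4 = 0 := by linarith
      rcases mul_eq_zero.mp h with h' | h'
      · exact absurd h' hc2.ne'
      · exact h'
    have hx6 : x 6 = 0 := by
      have h : ε / 2 * x 6 = 0 := by linarith
      rcases mul_eq_zero.mp h with h' | h'
      · exact absurd h' hc2.ne'
      · exact h'
    have hx0 : x 0 = 0 := by
      have := A0; rw [hx3, hx5] at this; linarith
    have hx1 : x 1 = 0 := by
      have := A1; rw [hx4, hx6] at this; linarith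
    have hx2 : x 2 = 0 := by
      have := A2; rw [hx5, hx6] at this; linarith
    funext j
    obtain ⟨n, hn⟩ := j
    interval_cases n
    · exact hx0
    · exact hx1
    · exact hx2
    · exact hx3
    · exact hx4
    · exact hx5
    · exact hx6
  rw [hgHβ, Matrix.mulVec_mulVec, Matrix.nonsing_inv_mul H hHdet, Matrix.one_mulVec]
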